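/- Let X = σ² + a²P + b²Q and Y = σ² + Qb² − Pa². Then X² − 4a²b²PQ ≥ 0, and the pair (v₁*, v₂*) with v₂* = (X − √(X² − 4a²b²PQ))/(2ab√Q) and v₁* = √(P − v₂*²) is a well-defined (i.e., 0 ≤ v₂*² ≤ P) maximizer of a²v₁²/(σ² + (√Q·b − a·v₂)²) over all v₁, v₂ ≥ 0 with v₁² + v₂² ≤ P, and the maximum value equals γ*₁,S3 = (−Y + √(Y² + 4σ²Pa²))/(2σ²). -/

import Mathlib

open Real in
/-- Optimal solution and optimal value of problem (P-S3). -/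
theorem stmt_2 (a b P Q σ2 : ℝ) (ha : 0 < a) (hb : 0 < b) (hP : 0 < P)
    (hQ : 0 < Q) (hσ : 0 < σ2)
    (X Y v1star v2star : ℝ)
    (hX : X = σ2 + a ^ 2 * P + b ^ 2 * Q)
    (hY : Y = σ2 + Q * b ^ 2 - P * a ^ 2)
    (hv2 : v2star = (X - Real.sqrt (X ^ 2 - 4 * a ^ 2 * b ^ 2 * P * Q)) /
      (2 * a * b * Real.sqrt Q))
    (hv1 : v1star = Real.sqrt (P - v2star ^ 2)) :
    X ^ 2 - 4 * a ^ 2 * b ^ 2 * P * Q ≥ 0 ∧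
    (0 ≤ v2star ^ 2 ∧ v2star ^ 2 ≤ P) ∧
    (0 ≤ v1star ∧ 0 ≤ v2star ∧ v1star ^ 2 + v2star ^ 2 ≤ P) ∧
    (∀ v1 v2 : ℝ, 0 ≤ v1 → 0 ≤ v2 → v1 ^ 2 + v2 ^ 2 ≤ P →
      a ^ 2 * v1 ^ 2 / (σ2 + (Real.sqrt Q * b - a * v2) ^ 2) ≤
      a ^ 2 * v1star ^ 2 / (σ2 + (Real.sqrt Q * b - a * v2star) ^ 2)) ∧
    a ^ 2 * v1star ^ 2 / (σ2 + (Real.sqrt Q * b - a * v2star) ^ 2) =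
      (-Y + Real.sqrt (Y ^ 2 + 4 * σ2 * P * a ^ 2)) / (2 * σ2) := by
  have hsq : 0 < Real.sqrt Q := Real.sqrt_pos.mpr hQ
  have hD : X ^ 2 - 4 * a ^ 2 * b ^ 2 * P * Q = Y ^ 2 + 4 * σ2 * P * a ^ 2 := by
    subst hX hY; ring
  have hDnn : 0 ≤ X ^ 2 - 4 * a ^ 2 * b ^ 2 * P * Q := by rw [hD]; positivity
  have hXpos : 0 < X := by rw [hX]; positivity
  set c : ℝ := Real.sqrt Q * b with hc
  have hcpos : 0 < c := mul_pos hsq hb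
  have hc2 : c ^ 2 = Q * b ^ 2 := by
    rw [hc, mul_pow, Real.sq_sqrt hQ.le]
  clear_value c
  set S : ℝ := Real.sqrt (X ^ 2 - 4 * a ^ 2 * b ^ 2 * P * Q) with hSdef
  have hS0 : 0 ≤ S := Real.sqrt_nonneg _
  have hS2 : S ^ 2 = Y ^ 2 + 4 * σ2 * P * a ^ 2 := by
    rw [hSdef, Real.sq_sqrt hDnn, hD]
  have hSeq : Real.sqrt (Y ^ 2 + 4 * σ2 * P * a ^ 2) = S := by
    rw [hSdef, hD]
  have hSX : S ≤ X := by
    rw [hSdef]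
    calc Real.sqrt (X ^ 2 - 4 * a ^ 2 * b ^ 2 * P * Q) ≤ Real.sqrt (X ^ 2) :=
          Real.sqrt_le_sqrt (by nlinarith [mul_pos (mul_pos (mul_pos (mul_pos hP hQ)
            (mul_pos ha ha)) hb) hb])
      _ = X := by rw [Real.sqrt_sq hXpos.le]
  clear_value S
  have hSY : Y < S := by
    have hpos : 0 < 4 * σ2 * P * a ^ 2 := by positivity
    nlinarith [hS2, hS0, hpos]
  set γ : ℝ := (-Y + S) / (2 * σ2) with hγdef
  have hγpos : 0 < γ := by
    rw [hγdef]; apply div_pos <;> linarith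
  have h1 : 2 * σ2 * γ = S - Y := by
    rw [hγdef]; field_simp; ring
  clear_value γ
  have hγ1 : 0 < γ + 1 := by linarith
  have h2 : 2 * a * c * v2star = X - S := by
    rw [hv2, hc]
    field_simp
  have key : γ ^ 2 * σ2 + γ * Y = a ^ 2 * P := by
    have key' : 4 * σ2 * (γ ^ 2 * σ2 + γ * Y) = 4 * σ2 * (a ^ 2 * P) := by
      linear_combination (2 * σ2 * γ + S + Y) * h1 + hS2
    exact mul_left_cancel₀ (by positivity) key'
  have hkey : (γ + 1) * (a * v2star) = γ * c := by
    have h4c : (0:ℝ) < 4 * σ2 * c := by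
      have : (0:ℝ) < 4 * σ2 := by positivity
      exact mul_pos this hcpos
    have hkey' : 4 * σ2 * c * ((γ + 1) * (a * v2star)) = 4 * σ2 * c * (γ * c) := by
      linear_combination (X - S - 2 * c ^ 2) * h1 + (2 * σ2 * γ + 2 * σ2) * h2
        - 2 * (S - Y) * hc2 - hS2 + (S - Y + 2 * σ2) * hX + (S - Y - 2 * σ2) * hY
    exact mul_left_cancel₀ h4c.ne' hkey'
  have hq : ∀ v2 : ℝ, (γ + 1) * (γ * (σ2 + (c - a * v2) ^ 2) - a ^ 2 * (P - v2 ^ 2))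
      = ((γ + 1) * (a * v2) - γ * c) ^ 2 := by
    intro v2
    linear_combination key + γ * hc2 - γ * hY
  have heq : γ * (σ2 + (c - a * v2star) ^ 2) = a ^ 2 * (P - v2star ^ 2) := by
    have h0 := hq v2star
    rw [hkey, sub_self] at h0
    have h0' : γ * (σ2 + (c - a * v2star) ^ 2) - a ^ 2 * (P - v2star ^ 2) = 0 := by
      rcases mul_eq_zero.mp (by rw [h0]; ring_nf : (γ + 1) *
        (γ * (σ2 + (c - a * v2star) ^ 2) - a ^ 2 * (P - v2star ^ 2)) = 0) with h | h
      · exact absurd h hγ1.ne'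
      · exact h
    linarith
  have hPv2 : 0 < P - v2star ^ 2 := by
    by_contra h
    push_neg at h
    have h1' : a ^ 2 * (P - v2star ^ 2) ≤ 0 :=
      mul_nonpos_of_nonneg_of_nonpos (by positivity) h
    have h2' : 0 < γ * (σ2 + (c - a * v2star) ^ 2) :=
      mul_pos hγpos (add_pos_of_pos_of_nonneg hσ (sq_nonneg _))
    linarith
  have hv1sq : v1star ^ 2 = P - v2star ^ 2 := by
    rw [hv1, Real.sq_sqrt hPv2.le]
  have hv2nn : 0 ≤ v2star := by
    rw [hv2]
    apply div_nonneg (by linarith) (by positivity)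
  have hbound : ∀ v2 : ℝ, a ^ 2 * (P - v2 ^ 2) ≤ γ * (σ2 + (c - a * v2) ^ 2) := by
    intro v2
    have h0 : 0 ≤ (γ + 1) * (γ * (σ2 + (c - a * v2) ^ 2) - a ^ 2 * (P - v2 ^ 2)) := by
      rw [hq v2]; exact sq_nonneg _
    have h1' := (mul_nonneg_iff_of_pos_left hγ1).mp h0
    linarith
  have hden : ∀ v2 : ℝ, 0 < σ2 + (c - a * v2) ^ 2 := fun v2 =>
    add_pos_of_pos_of_nonneg hσ (sq_nonneg _)
  have hval : a ^ 2 * v1star ^ 2 / (σ2 + (c - a * v2star) ^ 2) = γ := by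
    rw [div_eq_iff (hden v2star).ne', hv1sq]
    linarith [heq]
  refine ⟨hDnn, ⟨sq_nonneg _, by linarith⟩, ⟨by rw [hv1]; exact Real.sqrt_nonneg _,
    hv2nn, by rw [hv1sq]; linarith⟩, ?_, ?_⟩
  · intro v1 v2 hv1' hv2' hsum
    rw [hval, div_le_iff₀ (hden v2)]
    have hb2 := hbound v2
    have hvle : v1 ^ 2 ≤ P - v2 ^ 2 := by linarith
    have hmul : a ^ 2 * v1 ^ 2 ≤ a ^ 2 * (P - v2 ^ 2) :=
      mul_le_mul_of_nonneg_left hvle (by positivity)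
    linarith
  · rw [hval, hSeq, hγdef]
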